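/- Let D be a nonempty finite digraph whose reachable fragments are R_1, …, R_p, and for each i let (P_i, org_i) be a valid DAG-depth decomposition of D[R_i] of depth d_i, where the DAGs P_i are pairwise disjoint. Then the disjoint union P of P_1, …, P_p together with the common extension org of the maps org_i is a valid DAG-depth decomposition of D of depth max_{1 ≤ i ≤ p} d_i. -/

import Mathlib

open scoped Classical

noncomputable section

/-- A finite directed graph: a finite vertex set together with an adjacency
relation whose edges join vertices of the graph. -/
structure FinDigraph (α : Type) where
  verts : Finset α
  Adj : α → α → Prop
  adj_mem : ∀ u v, Adj u v → u ∈ verts ∧ v ∈ verts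

namespace FinDigraph

variable {α β : Type}

/-- The out-neighbourhood `N⁺_D(v)`. -/
def outNbhd (D : FinDigraph α) (v : α) : Set α := {u | D.Adj v u}

/-- The set of vertices reachable from `s` by a (possibly trivial) directed path. -/
def reachSet (D : FinDigraph α) (s : α) : Finset α :=
  D.verts.filter fun v => Relation.ReflTransGen D.Adj s v

/-- A reachable fragment: an inclusion-maximal set among the reachable sets. -/
def IsFragment (D : FinDigraph α) (R : Finset α) : Prop :=
  (∃ s ∈ D.verts, R = D.reachSet s) ∧
  ∀ s ∈ D.verts, R ⊆ D.reachSet s → R = D.reachSet s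

/-- The collection of all reachable fragments of `D`. -/
def fragments (D : FinDigraph α) : Finset (Finset α) :=
  D.verts.powerset.filter fun R => D.IsFragment R

/-- The induced subdigraph `D[S]`. -/
def induce (D : FinDigraph α) (S : Finset α) : FinDigraph α where
  verts := D.verts ∩ S
  Adj u v := D.Adj u v ∧ u ∈ S ∧ v ∈ S
  adj_mem := fun u v h => ⟨Finset.mem_inter.mpr ⟨(D.adj_mem u v h.1).1, h.2.1⟩,
    Finset.mem_inter.mpr ⟨(D.adj_mem u v h.1).2, h.2.2⟩⟩

/-- Deletion of a vertex: `D − v = D[V(D) ∖ {v}]`. -/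
def deleteVert (D : FinDigraph α) (v : α) : FinDigraph α :=
  D.induce (D.verts.erase v)

/-- Fuel-based helper for DAG-depth; the fuel `|V(D)|` always suffices since each
recursive call strictly decreases the number of vertices. -/
def ddpAux : ℕ → FinDigraph α → ℕ
  | 0, _ => 0
  | n+1, D =>
    if hcard : D.verts.card ≤ 1 then 1
    else if D.fragments.card = 1 then
      1 + D.verts.inf' (Finset.card_pos.mp (by omega)) fun v => ddpAux n (D.deleteVert v)
    else
      D.fragments.sup fun R => ddpAux n (D.induce R)

/-- The DAG-depth of a digraph. -/
def ddp (D : FinDigraph α) : ℕ := ddpAux D.verts.card D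

/-- A DAG: a (finite) digraph with no directed cycles. -/
def IsDag (P : FinDigraph α) : Prop := ∀ v, ¬ Relation.TransGen P.Adj v v

/-- A root of a DAG: a vertex of indegree zero. -/
def IsRoot (P : FinDigraph α) (r : α) : Prop := r ∈ P.verts ∧ ∀ u, ¬ P.Adj u r

/-- `y` is a descendant of `x`: there is a (possibly trivial) directed path from `x` to `y`. -/
def Desc (P : FinDigraph α) (x y : α) : Prop := Relation.ReflTransGen P.Adj x y

/-- `l` is a directed path in `P` starting at a root of `P` and ending at `v`. -/
def IsRootPath (P : FinDigraph α) (l : List α) (v : α) : Prop :=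
  l ≠ [] ∧ l.Chain' P.Adj ∧ (∀ x ∈ l, x ∈ P.verts) ∧
  (∃ r, l.head? = some r ∧ P.IsRoot r) ∧ l.getLast? = some v

/-- The depth of a DAG: the maximum number of vertices on a directed path. -/
def depth (P : FinDigraph α) : ℕ :=
  sSup {n : ℕ | ∃ l : List α, l.Chain' P.Adj ∧ (∀ x ∈ l, x ∈ P.verts) ∧ l.length = n}

/-- The Neighbor cover condition for a DAG-depth decomposition `(P, org)` of `D`. -/
def NeighborCover (D : FinDigraph α) (P : FinDigraph β) (org : β → α) : Prop :=
  ∀ v' ∈ P.verts, ∀ u, D.Adj (org v') u →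
    (∃ u' ∈ P.verts, org u' = u ∧ P.Desc v' u') ∨
    (∀ l, P.IsRootPath l v' → ∃ u' ∈ l, org u' = u)

/-- `(P, org)` is a valid DAG-depth decomposition of `D`: `P` is a DAG, `org` maps
`V(P)` onto `V(D)`, and the Neighbor cover condition holds. -/
def IsValidDecomp (D : FinDigraph α) (P : FinDigraph β) (org : β → α) : Prop :=
  P.IsDag ∧ (∀ v' ∈ P.verts, org v' ∈ D.verts) ∧
  (∀ v ∈ D.verts, ∃ v' ∈ P.verts, org v' = v) ∧
  NeighborCover D P org

end FinDigraph

namespace FinDigraph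

/-- The disjoint union of a family of digraphs (on a common ambient vertex type). -/
def unionDigraph {β : Type} {p : ℕ} (P : Fin p → FinDigraph β) : FinDigraph β where
  verts := Finset.univ.biUnion fun i => (P i).verts
  Adj u v := ∃ i, (P i).Adj u v
  adj_mem := by
    rintro u v ⟨i, h⟩
    exact ⟨Finset.mem_biUnion.mpr ⟨i, Finset.mem_univ _, ((P i).adj_mem u v h).1⟩,
      Finset.mem_biUnion.mpr ⟨i, Finset.mem_univ _, ((P i).adj_mem u v h).2⟩⟩

end FinDigraph

namespace FinDigraph

variable {α β : Type}

lemma mem_reachSet {D : FinDigraph α} {s v : α} :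
    v ∈ D.reachSet s ↔ v ∈ D.verts ∧ Relation.ReflTransGen D.Adj s v :=
  Finset.mem_filter

/-- Every vertex lies in some reachable fragment. -/
lemma exists_fragment_mem (D : FinDigraph α) {v : α} (hv : v ∈ D.verts) :
    ∃ F, D.IsFragment F ∧ v ∈ F := by
  classical
  set T := D.verts.filter (fun s => D.reachSet v ⊆ D.reachSet s) with hT
  have hvT : v ∈ T := by
    simp only [hT, Finset.mem_filter]
    exact ⟨hv, subset_rfl⟩
  obtain ⟨s0, hs0T, hmax⟩ := T.exists_max_image (fun s => (D.reachSet s).card) ⟨v, hvT⟩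
  rw [hT, Finset.mem_filter] at hs0T
  refine ⟨D.reachSet s0, ⟨⟨s0, hs0T.1, rfl⟩, ?_⟩, ?_⟩
  · intro s hs hsub
    have hsT : s ∈ T := by
      rw [hT, Finset.mem_filter]
      exact ⟨hs, hs0T.2.trans hsub⟩
    exact Finset.eq_of_subset_of_card_le hsub (hmax s hsT)
  · exact hs0T.2 (mem_reachSet.mpr ⟨hv, Relation.ReflTransGen.refl⟩)

lemma transGen_mem_right {Q : FinDigraph β} {a b : β}
    (h : Relation.TransGen Q.Adj a b) : b ∈ Q.verts := by
  induction h with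
  | single h => exact (Q.adj_mem _ _ h).2
  | tail _ h _ => exact (Q.adj_mem _ _ h).2

section Union

variable {p : ℕ} {P : Fin p → FinDigraph β}

lemma comp_eq (hdisj : ∀ i j, i ≠ j → Disjoint (P i).verts (P j).verts) {i j : Fin p} {b : β}
    (hi : b ∈ (P i).verts) (hj : b ∈ (P j).verts) : i = j := by
  by_contra h
  exact Finset.disjoint_left.mp (hdisj i j h) hi hj

lemma union_transGen (hdisj : ∀ i j, i ≠ j → Disjoint (P i).verts (P j).verts) {a b : β}
    (h : Relation.TransGen (unionDigraph P).Adj a b) :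
    ∃ i, Relation.TransGen (P i).Adj a b := by
  induction h with
  | single h => obtain ⟨i, h⟩ := h; exact ⟨i, .single h⟩
  | tail hab hbc ih =>
    obtain ⟨i, hi⟩ := ih
    obtain ⟨j, hj⟩ := hbc
    have hij : i = j := comp_eq hdisj (transGen_mem_right hi) ((P j).adj_mem _ _ hj).1
    subst hij
    exact ⟨i, hi.tail hj⟩

lemma union_chain' (hdisj : ∀ i j, i ≠ j → Disjoint (P i).verts (P j).verts) {i : Fin p} :
    ∀ l : List β, l.Chain' (unionDigraph P).Adj →
      ∀ v, l.getLast? = some v → v ∈ (P i).verts →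
      l.Chain' (P i).Adj ∧ ∀ x ∈ l, x ∈ (P i).verts := by
  intro l
  induction l with
  | nil => intro _ v hv; simp at hv
  | cons a l ih =>
    intro hch v hv hvi
    cases l with
    | nil =>
      simp only [List.getLast?_singleton, Option.some_inj] at hv
      subst hv
      exact ⟨List.isChain_singleton a, by simpa using hvi⟩
    | cons b l' =>
      rw [List.Chain', List.isChain_cons_cons] at hch
      rw [List.getLast?_cons_cons] at hv
      obtain ⟨hch', hmem⟩ := ih hch.2 v hv hvi
      have hb : b ∈ (P i).verts := hmem b List.mem_cons_self
      obtain ⟨j, hj⟩ := hch.1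
      have hij : i = j := comp_eq hdisj hb ((P j).adj_mem _ _ hj).2
      subst hij
      refine ⟨List.isChain_cons_cons.mpr ⟨hj, hch'⟩, ?_⟩
      intro x hx
      rcases List.mem_cons.mp hx with rfl | hx
      · exact ((P i).adj_mem _ _ hj).1
      · exact hmem x hx

lemma union_rootPath (hdisj : ∀ i j, i ≠ j → Disjoint (P i).verts (P j).verts) {i : Fin p} {l : List β} {v : β}
    (hl : (unionDigraph P).IsRootPath l v) (hvi : v ∈ (P i).verts) :
    (P i).IsRootPath l v ∧ ∀ x ∈ l, x ∈ (P i).verts := by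
  obtain ⟨hne, hch, hmem, ⟨r, hr, hroot⟩, hlast⟩ := hl
  obtain ⟨hch', hmem'⟩ := union_chain' hdisj l hch v hlast hvi
  have hrl : r ∈ l := List.mem_of_mem_head? hr
  refine ⟨⟨hne, hch', hmem', ⟨r, hr, hmem' r hrl, ?_⟩, hlast⟩, hmem'⟩
  intro u hu
  exact hroot.2 u ⟨i, hu⟩

end Union

lemma chain'_length_le {Q : FinDigraph β} (hdag : Q.IsDag) {l : List β}
    (hch : l.Chain' Q.Adj) (hm : ∀ x ∈ l, x ∈ Q.verts) :
    l.length ≤ Q.verts.card := by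
  haveI : IsTrans β (Relation.TransGen Q.Adj) := ⟨fun _ _ _ h h' => h.trans h'⟩
  have hpw : l.Pairwise (Relation.TransGen Q.Adj) :=
    List.isChain_iff_pairwise.mp (hch.imp fun {a b} h => Relation.TransGen.single h)
  have hnd : l.Nodup := by
    refine hpw.imp ?_
    intro a b h heq
    exact hdag a (heq ▸ h)
  have hsub : l.toFinset ⊆ Q.verts := fun x hx => hm x (List.mem_toFinset.mp hx)
  calc l.length = l.toFinset.card := (List.toFinset_card_of_nodup hnd).symm
    _ ≤ _ := Finset.card_le_card hsub

/-- The set of chain lengths whose sup is the depth. -/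
def depthSet (Q : FinDigraph β) : Set ℕ :=
  {n : ℕ | ∃ l : List β, l.Chain' Q.Adj ∧ (∀ x ∈ l, x ∈ Q.verts) ∧ l.length = n}

lemma depth_eq_sSup (Q : FinDigraph β) : Q.depth = sSup (depthSet Q) := rfl

lemma depthSet_nonempty (Q : FinDigraph β) : (depthSet Q).Nonempty :=
  ⟨0, [], List.isChain_nil, by simp, rfl⟩

lemma depthSet_bddAbove {Q : FinDigraph β} (hdag : Q.IsDag) :
    BddAbove (depthSet Q) := by
  refine ⟨Q.verts.card, ?_⟩
  rintro n ⟨l, hch, hm, rfl⟩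
  exact chain'_length_le hdag hch hm

end FinDigraph

open FinDigraph in
/-- If `R 0, …, R (p-1)` are (all) the reachable fragments of a nonempty digraph `D`
and `(P i, orgs i)` is a valid DAG-depth decomposition of `D[R i]` of depth `d i`,
with the `P i` pairwise disjoint, then the disjoint union of the `P i` together with
the common extension `org` of the `orgs i` is a valid DAG-depth decomposition of `D`
of depth `max_i (d i)`. -/
theorem disjoint_union_of_fragment_decomps {α β : Type} (D : FinDigraph α)
    (hne : D.verts.Nonempty) (p : ℕ) (hp : 1 ≤ p)
    (R : Fin p → Finset α) (hRinj : Function.Injective R)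
    (hR : ∀ F : Finset α, D.IsFragment F ↔ ∃ i, F = R i)
    (P : Fin p → FinDigraph β) (orgs : Fin p → β → α)
    (hdisj : ∀ i j, i ≠ j → Disjoint (P i).verts (P j).verts)
    (hvalid : ∀ i, IsValidDecomp (D.induce (R i)) (P i) (orgs i))
    (d : Fin p → ℕ) (hd : ∀ i, depth (P i) = d i)
    (org : β → α) (horg : ∀ i, ∀ x ∈ (P i).verts, org x = orgs i x) :
    IsValidDecomp D (unionDigraph P) org ∧
      depth (unionDigraph P) = Finset.univ.sup d := by
  have hUdag : (unionDigraph P).IsDag := by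
    intro v hv
    obtain ⟨i, hi⟩ := union_transGen hdisj hv
    exact (hvalid i).1 v hi
  have hmemU : ∀ {i : Fin p} {x : β}, x ∈ (P i).verts → x ∈ (unionDigraph P).verts :=
    fun {i x} hx => Finset.mem_biUnion.mpr ⟨i, Finset.mem_univ _, hx⟩
  have hmemU' : ∀ {x : β}, x ∈ (unionDigraph P).verts → ∃ i, x ∈ (P i).verts := by
    intro x hx
    obtain ⟨i, _, hi⟩ := Finset.mem_biUnion.mp hx
    exact ⟨i, hi⟩
  constructor
  · refine ⟨hUdag, ?_, ?_, ?_⟩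
    · -- org maps V(P) into V(D)
      intro v' hv'
      obtain ⟨i, hi⟩ := hmemU' hv'
      rw [horg i v' hi]
      have := (hvalid i).2.1 v' hi
      exact (Finset.mem_inter.mp this).1
    · -- surjectivity
      intro v hv
      obtain ⟨F, hF, hvF⟩ := D.exists_fragment_mem hv
      obtain ⟨i, rfl⟩ := (hR F).mp hF
      obtain ⟨v', hv', horgv⟩ := (hvalid i).2.2.1 v (Finset.mem_inter.mpr ⟨hv, hvF⟩)
      exact ⟨v', hmemU hv', (horg i v' hv').trans horgv⟩
    · -- neighbor cover
      intro v' hv' u hadj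
      obtain ⟨i, hi⟩ := hmemU' hv'
      have horgv : org v' = orgs i v' := horg i v' hi
      have hvR : orgs i v' ∈ D.verts ∩ R i := (hvalid i).2.1 v' hi
      -- u lies in R i
      have hfrag : D.IsFragment (R i) := (hR (R i)).mpr ⟨i, rfl⟩
      obtain ⟨s, hs, hRs⟩ := hfrag.1
      have huR : u ∈ R i := by
        rw [hRs]
        have h1 : orgs i v' ∈ D.reachSet s := by
          rw [← hRs]; exact (Finset.mem_inter.mp hvR).2
        have h2 := (mem_reachSet.mp h1).2
        rw [← horgv] at h2
        exact mem_reachSet.mpr ⟨(D.adj_mem _ _ hadj).2, h2.tail hadj⟩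
      have hadj' : (D.induce (R i)).Adj (orgs i v') u := by
        refine ⟨?_, (Finset.mem_inter.mp hvR).2, huR⟩
        rw [← horgv]; exact hadj
      rcases (hvalid i).2.2.2 v' hi u hadj' with ⟨u', hu', horgu, hdesc⟩ | hpath
      · refine Or.inl ⟨u', hmemU hu', (horg i u' hu').trans horgu, ?_⟩
        exact Relation.ReflTransGen.mono (r := (P i).Adj) (p := (unionDigraph P).Adj) (fun a b h => ⟨i, h⟩) _ _ hdesc
      · refine Or.inr fun l hl => ?_
        obtain ⟨hl', hmeml⟩ := union_rootPath hdisj hl hi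
        obtain ⟨u', hu'l, hu'⟩ := hpath l hl'
        exact ⟨u', hu'l, (horg i u' (hmeml u' hu'l)).trans hu'⟩
  · -- depth
    apply le_antisymm
    · rw [depth_eq_sSup]
      refine csSup_le (depthSet_nonempty _) ?_
      rintro n ⟨l, hch, hm, rfl⟩
      cases l with
      | nil => simp
      | cons a l' =>
        set v := (a :: l').getLast (List.cons_ne_nil a l') with hvdef
        have hv : (a :: l').getLast? = some v := List.getLast?_eq_getLast _
        have hvU : v ∈ (unionDigraph P).verts := hm v (List.getLast_mem _)
        obtain ⟨i, hvi⟩ := hmemU' hvU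
        obtain ⟨hch', hmem'⟩ := union_chain' hdisj _ hch v hv hvi
        have hmemi : (a :: l').length ∈ depthSet (P i) := ⟨a :: l', hch', hmem', rfl⟩
        calc (a :: l').length ≤ depth (P i) :=
              le_csSup (depthSet_bddAbove (hvalid i).1) hmemi
          _ = d i := hd i
          _ ≤ Finset.univ.sup d := Finset.le_sup (Finset.mem_univ i)
    · apply Finset.sup_le
      intro i _
      rw [← hd i, depth_eq_sSup, depth_eq_sSup]
      refine csSup_le_csSup (depthSet_bddAbove hUdag) (depthSet_nonempty _) ?_
      rintro n ⟨l, hch, hm, rfl⟩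
      exact ⟨l, hch.imp fun {a b} h => ⟨i, h⟩, fun x hx => hmemU (hm x hx), rfl⟩
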